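/- Let (a_n), (b_n) be nonnegative real sequences satisfying a_{n+1} ≤ b_n + C₁√(b_n) + C₂ and b_n ≤ a_n + C₁√(a_n) + C₂ for all n, with a_0 ≤ A. Then the running maximum Ê_n = max over j ≤ n of (a_j, b_j) satisfies Ê_n ≤ Ê_0 + 2n C₁ √(Ê_n) + 2n C₂; consequently, if a_0 ≤ C h^{2m+2}, C₁ = C Δt h^{m+1}, C₂ = C Δt² h^{2m+2}, and nΔt = t_n, then Ê_n ≤ C'(1 + t_n²) h^{2m+2} for some constant C' independent of h and n. -/

import Mathlib

/-- Running maximum `Ê_n = max_{j ≤ n} (a_j, b_j)`. -/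
noncomputable def runMax (a b : ℕ → ℝ) (n : ℕ) : ℝ :=
  (Finset.range (n + 1)).sup' Finset.nonempty_range_add_one (fun j => max (a j) (b j))

lemma le_runMax (a b : ℕ → ℝ) {j n : ℕ} (hj : j ≤ n) :
    max (a j) (b j) ≤ runMax a b n :=
  Finset.le_sup' (fun j => max (a j) (b j)) (Finset.mem_range.mpr (Nat.lt_succ_of_le hj))

lemma runMax_le (a b : ℕ → ℝ) {n : ℕ} {c : ℝ}
    (H : ∀ j ≤ n, max (a j) (b j) ≤ c) : runMax a b n ≤ c :=
  Finset.sup'_le _ _ fun j hj => H j (Nat.lt_succ_iff.mp (Finset.mem_range.mp hj))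

lemma runMax_mono (a b : ℕ → ℝ) (n : ℕ) : runMax a b n ≤ runMax a b (n + 1) :=
  runMax_le a b fun j hj => le_runMax a b (hj.trans (Nat.le_succ n))

lemma runMax_zero (a b : ℕ → ℝ) : runMax a b 0 = max (a 0) (b 0) := by
  simp [runMax]

set_option maxHeartbeats 800000 in
/-- Discrete Grönwall-type estimate for the Hermite-leapfrog convergence proof:
with `C₁ = C Δt h^{m+1}`, `C₂ = C Δt² h^{2m+2}` and `a₀ ≤ C h^{2m+2}`, the running
maximum satisfies `Ê_n ≤ Ê_0 + 2n C₁ √Ê_n + 2n C₂`, and consequently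
`Ê_n ≤ C'(1 + t_n²) h^{2m+2}` for a constant `C'` independent of `h` and `n`. -/
theorem discrete_gronwall_estimate
    (C Δt : ℝ) (hC : 0 < C) (hΔt : 0 < Δt) :
    ∃ C' : ℝ, 0 < C' ∧
      ∀ (h : ℝ) (m : ℕ) (a b : ℕ → ℝ), 0 < h →
        (∀ n, 0 ≤ a n) → (∀ n, 0 ≤ b n) →
        (∀ n, a (n + 1) ≤ b n + (C * Δt * h ^ (m + 1)) * Real.sqrt (b n)
            + C * Δt ^ 2 * h ^ (2 * m + 2)) →
        (∀ n, b n ≤ a n + (C * Δt * h ^ (m + 1)) * Real.sqrt (a n)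
            + C * Δt ^ 2 * h ^ (2 * m + 2)) →
        a 0 ≤ C * h ^ (2 * m + 2) →
        ∀ n : ℕ,
          runMax a b n ≤ runMax a b 0
              + 2 * n * (C * Δt * h ^ (m + 1)) * Real.sqrt (runMax a b n)
              + 2 * n * (C * Δt ^ 2 * h ^ (2 * m + 2)) ∧
          runMax a b n ≤ C' * (1 + ((n : ℝ) * Δt) ^ 2) * h ^ (2 * m + 2) := by
  have hsC : 0 ≤ Real.sqrt C := Real.sqrt_nonneg C
  set K0 : ℝ := C + C * Real.sqrt C * Δt + C * Δt ^ 2 with hK0def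
  have hK0 : 0 < K0 := by positivity
  refine ⟨2 * K0 + 4 * C ^ 2 + 4 * C * Δt, by positivity, ?_⟩
  intro h m a b hh ha hb hab hba ha0 n
  set C1 : ℝ := C * Δt * h ^ (m + 1) with hC1def
  set C2 : ℝ := C * Δt ^ 2 * h ^ (2 * m + 2) with hC2def
  have hC1 : 0 ≤ C1 := by positivity
  have hC2 : 0 ≤ C2 := by positivity
  set E : ℕ → ℝ := runMax a b with hEdef
  have hEnn : ∀ k, 0 ≤ E k := fun k =>
    le_trans (ha 0) (le_trans (le_max_left _ _) (le_runMax a b (Nat.zero_le k)))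
  have hmono : ∀ k, E k ≤ E (k + 1) := runMax_mono a b
  have hpow : h ^ (2 * m + 2) = (h ^ (m + 1)) ^ 2 := by
    rw [← pow_mul]; congr 1; omega
  -- one step estimate
  have hstep : ∀ k, E (k + 1) ≤ E k + 2 * C1 * Real.sqrt (E (k + 1)) + 2 * C2 := by
    intro k
    have hak1 : a (k + 1) ≤ E (k + 1) :=
      le_trans (le_max_left _ _) (le_runMax a b le_rfl)
    have hbk : b k ≤ E k := le_trans (le_max_right _ _) (le_runMax a b le_rfl)
    have hsb : Real.sqrt (b k) ≤ Real.sqrt (E k) := Real.sqrt_le_sqrt hbk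
    have hsE : Real.sqrt (E k) ≤ Real.sqrt (E (k + 1)) := Real.sqrt_le_sqrt (hmono k)
    have hsa : Real.sqrt (a (k + 1)) ≤ Real.sqrt (E (k + 1)) := Real.sqrt_le_sqrt hak1
    have h1 : a (k + 1) ≤ E k + C1 * Real.sqrt (E (k + 1)) + C2 := by
      have := hab k
      nlinarith [mul_le_mul_of_nonneg_left hsb hC1, mul_le_mul_of_nonneg_left hsE hC1]
    have h2 : b (k + 1) ≤ E k + 2 * C1 * Real.sqrt (E (k + 1)) + 2 * C2 := by
      have := hba (k + 1)
      nlinarith [mul_le_mul_of_nonneg_left hsa hC1]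
    apply runMax_le
    intro j hj
    rcases Nat.lt_succ_iff_lt_or_eq.mp (Nat.lt_succ_of_le hj) with hj' | rfl
    · have hjE : max (a j) (b j) ≤ E k := le_runMax a b (Nat.lt_succ_iff.mp hj')
      nlinarith [Real.sqrt_nonneg (E (k + 1))]
    · exact max_le (by nlinarith [Real.sqrt_nonneg (E (k + 1))]) h2
  -- claim 1 by induction
  have claim1 : ∀ k : ℕ, E k ≤ E 0 + 2 * k * C1 * Real.sqrt (E k) + 2 * k * C2 := by
    intro k
    induction k with
    | zero => simp
    | succ k ih =>
      have hsE : Real.sqrt (E k) ≤ Real.sqrt (E (k + 1)) := Real.sqrt_le_sqrt (hmono k)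
      have key : 2 * (k : ℝ) * C1 * Real.sqrt (E k) ≤ 2 * (k : ℝ) * C1 * Real.sqrt (E (k + 1)) :=
        mul_le_mul_of_nonneg_left hsE (by positivity)
      have hs : 0 ≤ Real.sqrt (E (k + 1)) := Real.sqrt_nonneg _
      have := hstep k
      push_cast
      nlinarith
  refine ⟨claim1 n, ?_⟩
  -- bound on E 0
  have hsa0 : Real.sqrt (a 0) ≤ Real.sqrt C * h ^ (m + 1) := by
    have h1 : Real.sqrt (a 0) ≤ Real.sqrt (C * h ^ (2 * m + 2)) := Real.sqrt_le_sqrt ha0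
    rw [hpow, Real.sqrt_mul hC.le, Real.sqrt_sq (by positivity)] at h1
    exact h1
  have hhp : 0 < h ^ (2 * m + 2) := pow_pos hh _
  have hK0h : C * h ^ (2 * m + 2) + C * Real.sqrt C * Δt * h ^ (2 * m + 2)
      + C * Δt ^ 2 * h ^ (2 * m + 2) = K0 * h ^ (2 * m + 2) := by rw [hK0def]; ring
  have hpos1 : 0 ≤ C * Real.sqrt C * Δt * h ^ (2 * m + 2) := by positivity
  have hpos2 : 0 ≤ C * Δt ^ 2 * h ^ (2 * m + 2) := by positivity
  have hE0 : E 0 ≤ K0 * h ^ (2 * m + 2) := by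
    rw [hEdef, runMax_zero]
    have heq : C1 * (Real.sqrt C * h ^ (m + 1)) = C * Real.sqrt C * Δt * h ^ (2 * m + 2) := by
      rw [hC1def, hpow]; ring
    have h2 : C1 * Real.sqrt (a 0) ≤ C * Real.sqrt C * Δt * h ^ (2 * m + 2) := by
      have := mul_le_mul_of_nonneg_left hsa0 hC1
      linarith
    have h3 := hba 0
    exact max_le (by linarith) (by rw [hC2def] at h3; linarith)
  -- from claim1, quadratic absorption
  have hEn := claim1 n
  have hs2 : Real.sqrt (E n) ^ 2 = E n := Real.sq_sqrt (hEnn n)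
  have habs : E n ≤ 2 * E 0 + 4 * (n : ℝ) ^ 2 * C1 ^ 2 + 4 * (n : ℝ) * C2 := by
    have key : 2 * (n : ℝ) * C1 * Real.sqrt (E n) ≤ E n / 2 + 2 * (n : ℝ) ^ 2 * C1 ^ 2 := by
      clear hab hba claim1 hstep hmono hEnn ha hb hEn hE0
      nlinarith [sq_nonneg (Real.sqrt (E n) - 2 * (n : ℝ) * C1), hs2]
    linarith
  have hC1sq : C1 ^ 2 = C ^ 2 * Δt ^ 2 * h ^ (2 * m + 2) := by
    rw [hC1def, hpow]; ring
  have hn : 0 ≤ (n : ℝ) := Nat.cast_nonneg n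
  set x : ℝ := (n : ℝ) * Δt with hxdef
  have hx : 0 ≤ x := by positivity
  have e1 : 4 * (n : ℝ) ^ 2 * C1 ^ 2 = 4 * C ^ 2 * x ^ 2 * h ^ (2 * m + 2) := by
    rw [hC1sq, hxdef]; ring
  have e2 : 4 * (n : ℝ) * C2 = 4 * C * Δt * x * h ^ (2 * m + 2) := by
    rw [hC2def, hxdef]; ring
  have hscal : 2 * K0 + 4 * C ^ 2 * x ^ 2 + 4 * C * Δt * x
      ≤ (2 * K0 + 4 * C ^ 2 + 4 * C * Δt) * (1 + x ^ 2) := by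
    nlinarith [mul_nonneg (mul_nonneg hC.le hΔt.le) (sq_nonneg (x - 1)),
      mul_nonneg hK0.le (sq_nonneg x), sq_nonneg C,
      mul_nonneg (sq_nonneg C) (sq_nonneg x), mul_nonneg hC.le hΔt.le]
  have hmul := mul_le_mul_of_nonneg_right hscal hhp.le
  have hdist : (2 * K0 + 4 * C ^ 2 * x ^ 2 + 4 * C * Δt * x) * h ^ (2 * m + 2)
      = 2 * (K0 * h ^ (2 * m + 2)) + 4 * C ^ 2 * x ^ 2 * h ^ (2 * m + 2)
        + 4 * C * Δt * x * h ^ (2 * m + 2) := by ring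
  linarith
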